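/- For every n ≥ 1, the total number of P1-matches over all words in 𝓛_n satisfies Σ_{L ∈ 𝓛_n} P1-mch(L) = ((n+1)·binom(2n, n) − 4^n)/2. -/

import Mathlib

/-!
Words over the alphabet {E, N} are encoded as `List Bool`,
with `true` representing an east step `E` and `false` a north step `N`.
The word `w = w_1 ⋯ w_{2n}` corresponds to the lattice path from `(0,0)` to
`(n,n)` whose `j`-th step is east if `w_j = true` and north if `w_j = false`.
-/

/-- `w ∈ 𝓛_n`: the word `w` has exactly `n` `E`'s and `n` `N`'s. -/
def memL (n : ℕ) (w : List Bool) : Prop :=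
  w.count true = n ∧ w.count false = n

/-- The (0-indexed, increasing) list of positions at which the letter `b` occurs in `w`. -/
def occPos (w : List Bool) (b : Bool) : List ℕ :=
  (List.range w.length).filter (fun j => w.getD j (!b) == b)

/-- `ps_w({i, i+1})` (with `i` 1-indexed): the length-4 word obtained from `w` by
deleting, for each `j ∉ {i, i+1}`, the `j`-th occurrence of `E` and the `j`-th
occurrence of `N` (counted from left to right); i.e. the word formed by the
`i`-th and `(i+1)`-th occurrences of `E` and of `N`, read in their original order. -/
def pairedSubword (w : List Bool) (i : ℕ) : List Bool :=
  let keep : List ℕ := [(occPos w true).getD (i-1) 0, (occPos w true).getD i 0,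
                        (occPos w false).getD (i-1) 0, (occPos w false).getD i 0]
  ((List.range w.length).filter (fun j => keep.contains j)).map (fun j => w.getD j true)

/-- `P`-mch(w): the number of paired steps `i` with `1 ≤ i ≤ n-1` at which the
paired pattern `P` matches in `w ∈ 𝓛_n`. -/
def pmch (n : ℕ) (P w : List Bool) : ℕ :=
  ((Finset.Icc 1 (n-1)).filter (fun i => pairedSubword w i = P)).card

def P1 : List Bool := [true, true, false, false]   -- EENN
def P2 : List Bool := [true, false, true, false]   -- ENEN
def P3 : List Bool := [false, true, true, false]   -- NEEN
def P4 : List Bool := [true, false, false, true]   -- ENNE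
def P5 : List Bool := [false, true, false, true]   -- NENE
def P6 : List Bool := [false, false, true, true]   -- NNEE


def Wds : ℕ → ℕ → Finset (List Bool)
  | 0, 0 => {[]}
  | a+1, 0 => (Wds a 0).image (List.cons true)
  | 0, b+1 => (Wds 0 b).image (List.cons false)
  | a+1, b+1 => (Wds a (b+1)).image (List.cons true) ∪ (Wds (a+1) b).image (List.cons false)

lemma count_true_add_count_false (w : List Bool) : w.count true + w.count false = w.length := by
  induction w with
  | nil => simp
  | cons x t ih => cases x <;> simp [List.count_cons] <;> omega

lemma mem_Wds : ∀ a b (w : List Bool), w ∈ Wds a b ↔ w.count true = a ∧ w.count false = b := by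
  intro a b
  induction a, b using Wds.induct with
  | case1 =>
    intro w
    constructor
    · rintro h
      simp [Wds] at h
      subst h; simp
    · rintro ⟨h1, h2⟩
      have := count_true_add_count_false w
      have : w.length = 0 := by omega
      simp [Wds, List.length_eq_zero_iff.mp this]
  | case2 a ih =>
    intro w
    simp only [Wds, Finset.mem_image]
    constructor
    · rintro ⟨u, hu, rfl⟩
      have := (ih u).mp hu
      simp [List.count_cons]; omega
    · rintro ⟨h1, h2⟩
      cases w with
      | nil => simp at h1
      | cons x t =>
        cases x
        · simp [List.count_cons] at h2
        · refine ⟨t, (ih t).mpr ?_, rfl⟩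
          simp [List.count_cons] at h1 h2; omega
  | case3 b ih =>
    intro w
    simp only [Wds, Finset.mem_image]
    constructor
    · rintro ⟨u, hu, rfl⟩
      have := (ih u).mp hu
      simp [List.count_cons]; omega
    · rintro ⟨h1, h2⟩
      cases w with
      | nil => simp at h2
      | cons x t =>
        cases x
        · refine ⟨t, (ih t).mpr ?_, rfl⟩
          simp [List.count_cons] at h1 h2; omega
        · simp [List.count_cons] at h1
  | case4 a b ih1 ih2 =>
    intro w
    simp only [Wds, Finset.mem_union, Finset.mem_image]
    constructor
    · rintro (⟨u, hu, rfl⟩ | ⟨u, hu, rfl⟩)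
      · have := (ih1 u).mp hu
        simp [List.count_cons]; omega
      · have := (ih2 u).mp hu
        simp [List.count_cons]; omega
    · rintro ⟨h1, h2⟩
      cases w with
      | nil => simp at h1
      | cons x t =>
        cases x
        · refine Or.inr ⟨t, (ih2 t).mpr ?_, rfl⟩
          simp [List.count_cons] at h1 h2; omega
        · refine Or.inl ⟨t, (ih1 t).mpr ?_, rfl⟩
          simp [List.count_cons] at h1 h2; omega

lemma card_Wds : ∀ a b, (Wds a b).card = (a+b).choose a := by
  intro a b
  induction a, b using Wds.induct with
  | case1 => simp [Wds]
  | case2 a ih =>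
    rw [Wds, Finset.card_image_of_injective _ (fun x y h => by simpa using h), ih]
    simp [Nat.choose_self]
  | case3 b ih =>
    rw [Wds, Finset.card_image_of_injective _ (fun x y h => by simpa using h), ih]
    simp
  | case4 a b ih1 ih2 =>
    rw [Wds, Finset.card_union_of_disjoint, Finset.card_image_of_injective _ (fun x y h => by simpa using h), Finset.card_image_of_injective _ (fun x y h => by simpa using h), ih1, ih2]
    · have : a + 1 + (b + 1) = (a + b + 1) + 1 := by ring
      rw [this, Nat.choose_succ_succ]
      congr 1 <;> congr 1 <;> omega
    · simp only [Finset.disjoint_left, Finset.mem_image]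
      rintro x ⟨u, _, rfl⟩ ⟨v, _, h⟩
      simp at h



lemma occPos_append (w : List Bool) (x b : Bool) :
    occPos (w ++ [x]) b = occPos w b ++ (if x = b then [w.length] else []) := by
  unfold occPos
  rw [List.length_append, List.length_singleton, List.range_succ, List.filter_append]
  congr 1
  · apply List.filter_congr
    intro j hj
    rw [List.mem_range] at hj
    rw [List.getD_append _ _ _ _ hj]
  · simp only [List.filter_cons, List.filter_nil]
    rw [List.getD_append_right _ _ _ _ le_rfl, Nat.sub_self]
    cases x <;> cases b <;> simp

lemma occPos_sorted (w : List Bool) (b : Bool) : (occPos w b).Pairwise (· < ·) := by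
  apply List.Pairwise.filter
  exact List.pairwise_lt_range

lemma mem_occPos_lt (w : List Bool) (b : Bool) {j : ℕ} (h : j ∈ occPos w b) : j < w.length := by
  have := List.mem_filter.mp h
  simpa using this.1

lemma mem_occPos_val (w : List Bool) (b : Bool) {j : ℕ} (h : j ∈ occPos w b) :
    w.getD j (!b) = b := by
  have := List.mem_filter.mp h
  simpa using this.2

lemma mem_occPos_iff (w : List Bool) (b : Bool) (j : ℕ) :
    j ∈ occPos w b ↔ j < w.length ∧ w.getD j (!b) = b := by
  constructor
  · exact fun h => ⟨mem_occPos_lt w b h, mem_occPos_val w b h⟩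
  · rintro ⟨h1, h2⟩
    apply List.mem_filter.mpr
    refine ⟨List.mem_range.mpr h1, by simpa using h2⟩

lemma occPos_nodup (w : List Bool) (b : Bool) : (occPos w b).Nodup :=
  List.nodup_range.filter _

lemma length_occPos (w : List Bool) (b : Bool) : (occPos w b).length = w.count b := by
  induction w using List.reverseRecOn with
  | nil => simp [occPos]
  | append_singleton w x ih =>
    rw [occPos_append, List.length_append, ih, List.count_append]
    cases x <;> cases b <;> simp

lemma countP_occPos (w : List Bool) (b : Bool) (q : ℕ) :
    (occPos w b).countP (fun x => decide (x < q)) = (w.take q).count b := by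
  induction w using List.reverseRecOn with
  | nil => simp [occPos]
  | append_singleton w x ih =>
    rw [occPos_append, List.countP_append]
    by_cases hq : q ≤ w.length
    · rw [List.take_append_of_le_length hq, ih]
      have : (if x = b then [w.length] else []).countP (fun x => decide (x < q)) = 0 := by
        split <;> simp <;> omega
      omega
    · have h1 : (w ++ [x]).take q = w ++ [x] :=
        List.take_of_length_le (by rw [List.length_append]; simp; omega)
      have h2 : w.take q = w := List.take_of_length_le (by omega)
      rw [h1, ih, h2, List.count_append]
      have : (if x = b then [w.length] else []).countP (fun y => decide (y < q)) =
          List.count b [x] := by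
        have hlt : w.length < q := by omega
        cases x <;> cases b <;> simp [hlt]
      omega

/-- In a strictly sorted list, the `i`-th element is `< q` iff at least `i+1` elements are `< q`. -/
lemma sorted_getD_lt_iff {l : List ℕ} (hl : l.Pairwise (· < ·)) :
    ∀ i q, i < l.length → (l.getD i 0 < q ↔ i + 1 ≤ l.countP (fun x => decide (x < q))) := by
  induction l with
  | nil => intro i q h; simp at h
  | cons a t ih =>
    rw [List.pairwise_cons] at hl
    have hzero : ∀ q, ¬ a < q → t.countP (fun x => decide (x < q)) = 0 := by
      intro q hq
      rw [List.countP_eq_zero]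
      intro x hx
      have := hl.1 x hx
      simp; omega
    intro i q hi
    rcases i with _ | i
    · simp only [List.getD_cons_zero, List.countP_cons]
      constructor
      · intro h; simp [h]
      · intro h
        by_contra hc
        rw [hzero q hc, if_neg (by simpa using hc)] at h
        omega
    · simp only [List.getD_cons_succ, List.countP_cons]
      rw [List.length_cons] at hi
      rcases ih hl.2 i q (by omega) with h
      by_cases ha : a < q
      · rw [if_pos (by simpa using ha)]
        omega
      · rw [if_neg (by simpa using ha), hzero q ha]
        constructor
        · intro hlt
          exfalso
          have hm : t.getD i 0 ∈ t := by
            rw [List.getD_eq_getElem t 0 (show i < t.length by omega)]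
            exact List.getElem_mem _
          have := hl.1 _ hm
          omega
        · intro hh; omega

lemma sorted_getD_strictmono {l : List ℕ} (hl : l.Pairwise (· < ·)) {i j : ℕ}
    (hij : i < j) (hj : j < l.length) : l.getD i 0 < l.getD j 0 := by
  rw [List.getD_eq_getElem l 0 (show i < l.length by omega), List.getD_eq_getElem l 0 hj]
  have := List.pairwise_iff_get.mp hl ⟨i, by omega⟩ ⟨j, by omega⟩ (by simpa using hij)
  simpa using this

lemma sorted_countP_lt_getD {l : List ℕ} (hl : l.Pairwise (· < ·)) {i : ℕ} (hi : i < l.length) :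
    l.countP (fun x => decide (x < l.getD i 0)) = i := by
  have h1 : ¬ (l.getD i 0 < l.getD i 0) := lt_irrefl _
  rw [sorted_getD_lt_iff hl i _ hi] at h1
  rcases i with _ | i
  · omega
  · have h2 : l.getD i 0 < l.getD (i+1) 0 := sorted_getD_strictmono hl (by omega) hi
    rw [sorted_getD_lt_iff hl i _ (by omega)] at h2
    omega

/-- Membership gives an index. -/
lemma mem_getD_index {l : List ℕ} {x : ℕ} (h : x ∈ l) : ∃ i < l.length, l.getD i 0 = x := by
  rcases List.get_of_mem h with ⟨i, hi⟩
  refine ⟨i, i.isLt, ?_⟩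
  rw [List.getD_eq_getElem l 0 i.isLt, ← hi]
  simp



lemma getD_mem_self {l : List ℕ} {i : ℕ} (h : i < l.length) : l.getD i 0 ∈ l := by
  rw [List.getD_eq_getElem l 0 h]
  exact List.getElem_mem _

lemma val_at {w : List Bool} {b : Bool} {j : ℕ} (h : j ∈ occPos w b) : w.getD j true = b := by
  have h1 := mem_occPos_lt _ _ h
  have h2 := mem_occPos_val _ _ h
  rw [List.getD_eq_getElem w _ h1] at h2 ⊢
  exact h2

lemma index_recover {w : List Bool} {b : Bool} {j : ℕ} (h : j ∈ occPos w b) :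
    (occPos w b).getD ((w.take j).count b) 0 = j := by
  rcases mem_getD_index h with ⟨k, hk, hkj⟩
  have h2 : (w.take j).count b = k := by
    rw [← countP_occPos, ← hkj, sorted_countP_lt_getD (occPos_sorted w b) hk]
  rw [h2, hkj]

lemma filter_range_eq_sorted {m : ℕ} {l : List ℕ} (hs : l.Pairwise (· < ·))
    (hm : ∀ x ∈ l, x < m) (p : ℕ → Bool) (hp : ∀ j, p j = true ↔ j ∈ l) :
    (List.range m).filter p = l := by
  haveI : IsAntisymm ℕ (· < ·) := ⟨fun a b h1 h2 => absurd (h1.trans h2) (lt_irrefl a)⟩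
  have hnd : l.Nodup := hs.imp (fun h => ne_of_lt h)
  haveI : Std.Antisymm (α := ℕ) (· < ·) := ⟨fun a b h1 h2 => absurd (h1.trans h2) (lt_irrefl a)⟩
  apply (fun h1 h2 => List.Perm.eq_of_pairwise' (r := (· < ·)) h2 hs h1) ?_ ?_
  · apply (List.perm_ext_iff_of_nodup (List.nodup_range.filter p) hnd).mpr
    intro j
    rw [List.mem_filter, List.mem_range, hp]
    exact ⟨fun h => h.2, fun h => ⟨hm j h, h⟩⟩
  · exact List.Pairwise.filter p (List.pairwise_lt_range (n := m))

lemma pairedSubword_eq (w : List Bool) (i : ℕ) (l : List ℕ) (hs : l.Pairwise (· < ·))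
    (hm : ∀ x ∈ l, x < w.length)
    (hmem : ∀ j : ℕ, j ∈ l ↔ (j = (occPos w true).getD (i-1) 0 ∨ j = (occPos w true).getD i 0 ∨
      j = (occPos w false).getD (i-1) 0 ∨ j = (occPos w false).getD i 0)) :
    pairedSubword w i = l.map (fun j => w.getD j true) := by
  unfold pairedSubword
  dsimp only
  congr 1
  apply filter_range_eq_sorted hs hm
  intro j
  simp only [List.contains, List.elem_eq_mem, List.mem_cons, List.not_mem_nil, or_false,
    decide_eq_true_eq]
  exact (hmem j).symm

set_option maxHeartbeats 1000000 in
lemma pairedSubword_eq_P1_iff {n : ℕ} {w : List Bool} (hw1 : w.count true = n)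
    (hw2 : w.count false = n) {i : ℕ} (hi1 : 1 ≤ i) (hi2 : i + 1 ≤ n) :
    pairedSubword w i = P1 ↔
      (occPos w true).getD i 0 < (occPos w false).getD (i-1) 0 := by
  have lP : (occPos w true).length = n := by rw [length_occPos, hw1]
  have lQ : (occPos w false).length = n := by rw [length_occPos, hw2]
  obtain ⟨p0, hdefp0⟩ : ∃ x, x = (occPos w true).getD (i-1) 0 := ⟨_, rfl⟩
  obtain ⟨p1, hdefp1⟩ : ∃ x, x = (occPos w true).getD i 0 := ⟨_, rfl⟩
  obtain ⟨q0, hdefq0⟩ : ∃ x, x = (occPos w false).getD (i-1) 0 := ⟨_, rfl⟩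
  obtain ⟨q1, hdefq1⟩ : ∃ x, x = (occPos w false).getD i 0 := ⟨_, rfl⟩
  rw [← hdefp1, ← hdefq0]
  have hp0m : p0 ∈ occPos w true := hdefp0 ▸ getD_mem_self (by omega)
  have hp1m : p1 ∈ occPos w true := hdefp1 ▸ getD_mem_self (by omega)
  have hq0m : q0 ∈ occPos w false := hdefq0 ▸ getD_mem_self (by omega)
  have hq1m : q1 ∈ occPos w false := hdefq1 ▸ getD_mem_self (by omega)
  have vp0 : w.getD p0 true = true := val_at hp0m
  have vp1 : w.getD p1 true = true := val_at hp1m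
  have vq0 : w.getD q0 true = false := val_at hq0m
  have vq1 : w.getD q1 true = false := val_at hq1m
  have wp0 : p0 < w.length := mem_occPos_lt _ _ hp0m
  have wp1 : p1 < w.length := mem_occPos_lt _ _ hp1m
  have wq0 : q0 < w.length := mem_occPos_lt _ _ hq0m
  have wq1 : q1 < w.length := mem_occPos_lt _ _ hq1m
  have hp01 : p0 < p1 := by
    rw [hdefp0, hdefp1]
    exact sorted_getD_strictmono (occPos_sorted w true) (by omega) (by omega)
  have hq01 : q0 < q1 := by
    rw [hdefq0, hdefq1]
    exact sorted_getD_strictmono (occPos_sorted w false) (by omega) (by omega)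
  have nep0q0 : p0 ≠ q0 := fun h => by rw [h, vq0] at vp0; exact absurd vp0 (by decide)
  have nep0q1 : p0 ≠ q1 := fun h => by rw [h, vq1] at vp0; exact absurd vp0 (by decide)
  have nep1q0 : p1 ≠ q0 := fun h => by rw [h, vq0] at vp1; exact absurd vp1 (by decide)
  have nep1q1 : p1 ≠ q1 := fun h => by rw [h, vq1] at vp1; exact absurd vp1 (by decide)
  have key : ∀ (l : List ℕ), l.Pairwise (· < ·) → (∀ x ∈ l, x < w.length) →
      (∀ j : ℕ, j ∈ l ↔ (j = p0 ∨ j = p1 ∨ j = q0 ∨ j = q1)) →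
      pairedSubword w i = l.map (fun j => w.getD j true) := by
    intro l h1 h2 h3
    refine pairedSubword_eq w i l h1 h2 ?_
    rw [← hdefp0, ← hdefp1, ← hdefq0, ← hdefq1]
    exact h3
  constructor
  · intro hEq
    by_contra hc
    have hq0p1 : q0 < p1 := by omega
    have contra : ∀ (l : List ℕ), l.Pairwise (· < ·) → (∀ x ∈ l, x < w.length) →
        (∀ j : ℕ, j ∈ l ↔ (j = p0 ∨ j = p1 ∨ j = q0 ∨ j = q1)) →
        l.map (fun j => w.getD j true) ≠ P1 → False := by
      intro l h1 h2 h3 h4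
      exact h4 ((key l h1 h2 h3) ▸ hEq)
    rcases lt_trichotomy p0 q0 with hA | hA | hA
    · rcases lt_trichotomy p1 q1 with hB | hB | hB
      · refine contra [p0, q0, p1, q1] ?_ ?_ ?_ ?_
        · simp only [List.pairwise_cons, List.mem_cons, List.not_mem_nil, or_false, List.Pairwise.nil,
            and_true, forall_eq_or_imp, forall_eq, false_implies, implies_true]; omega
        · intro x hx; simp only [List.mem_cons, List.not_mem_nil, or_false] at hx; rcases hx with rfl|rfl|rfl|rfl <;> assumption
        · intro j; simp only [List.mem_cons, List.not_mem_nil, or_false]; tauto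
        · intro h
          simp only [List.map_cons, List.map_nil] at h
          rw [vp0, vp1, vq0, vq1] at h
          simp [P1] at h
      · omega
      · refine contra [p0, q0, q1, p1] ?_ ?_ ?_ ?_
        · simp only [List.pairwise_cons, List.mem_cons, List.not_mem_nil, or_false, List.Pairwise.nil,
            and_true, forall_eq_or_imp, forall_eq, false_implies, implies_true]; omega
        · intro x hx; simp only [List.mem_cons, List.not_mem_nil, or_false] at hx; rcases hx with rfl|rfl|rfl|rfl <;> assumption
        · intro j; simp only [List.mem_cons, List.not_mem_nil, or_false]; tauto
        · intro h
          simp only [List.map_cons, List.map_nil] at h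
          rw [vp0, vp1, vq0, vq1] at h
          simp [P1] at h
    · omega
    · rcases lt_trichotomy q1 p0 with hB | hB | hB
      · refine contra [q0, q1, p0, p1] ?_ ?_ ?_ ?_
        · simp only [List.pairwise_cons, List.mem_cons, List.not_mem_nil, or_false, List.Pairwise.nil,
            and_true, forall_eq_or_imp, forall_eq, false_implies, implies_true]; omega
        · intro x hx; simp only [List.mem_cons, List.not_mem_nil, or_false] at hx; rcases hx with rfl|rfl|rfl|rfl <;> assumption
        · intro j; simp only [List.mem_cons, List.not_mem_nil, or_false]; tauto
        · intro h
          simp only [List.map_cons, List.map_nil] at h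
          rw [vp0, vp1, vq0, vq1] at h
          simp [P1] at h
      · omega
      · rcases lt_trichotomy q1 p1 with hC | hC | hC
        · refine contra [q0, p0, q1, p1] ?_ ?_ ?_ ?_
          · simp only [List.pairwise_cons, List.mem_cons, List.not_mem_nil, or_false, List.Pairwise.nil,
            and_true, forall_eq_or_imp, forall_eq, false_implies, implies_true]; omega
          · intro x hx; simp only [List.mem_cons, List.not_mem_nil, or_false] at hx; rcases hx with rfl|rfl|rfl|rfl <;> assumption
          · intro j; simp only [List.mem_cons, List.not_mem_nil, or_false]; tauto
          · intro h
            simp only [List.map_cons, List.map_nil] at h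
            rw [vp0, vp1, vq0, vq1] at h
            simp [P1] at h
        · omega
        · refine contra [q0, p0, p1, q1] ?_ ?_ ?_ ?_
          · simp only [List.pairwise_cons, List.mem_cons, List.not_mem_nil, or_false, List.Pairwise.nil,
            and_true, forall_eq_or_imp, forall_eq, false_implies, implies_true]; omega
          · intro x hx; simp only [List.mem_cons, List.not_mem_nil, or_false] at hx; rcases hx with rfl|rfl|rfl|rfl <;> assumption
          · intro j; simp only [List.mem_cons, List.not_mem_nil, or_false]; tauto
          · intro h
            simp only [List.map_cons, List.map_nil] at h
            rw [vp0, vp1, vq0, vq1] at h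
            simp [P1] at h
  · intro hlt
    have heq : pairedSubword w i = [p0, p1, q0, q1].map (fun j => w.getD j true) := by
      refine key [p0, p1, q0, q1] ?_ ?_ ?_
      · simp only [List.pairwise_cons, List.mem_cons, List.not_mem_nil, or_false, List.Pairwise.nil,
            and_true, forall_eq_or_imp, forall_eq, false_implies, implies_true]; omega
      · intro x hx; simp only [List.mem_cons, List.not_mem_nil, or_false] at hx; rcases hx with rfl|rfl|rfl|rfl <;> assumption
      · intro j; simp only [List.mem_cons, List.not_mem_nil, or_false]
    rw [heq]
    simp only [List.map_cons, List.map_nil]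
    rw [vp0, vp1, vq0, vq1]
    rfl

def statN (w : List Bool) : ℕ :=
  ((Finset.range w.length).filter
    (fun j => w.getD j true = false ∧ (w.take j).count false + 2 ≤ (w.take j).count true)).card

lemma count_take_le (w : List Bool) (b : Bool) (j : ℕ) : (w.take j).count b ≤ w.count b :=
  (List.take_sublist j w).count_le b

lemma count_take_getD {w : List Bool} {b : Bool} {k : ℕ} (hk : k < w.count b) :
    (w.take ((occPos w b).getD k 0)).count b = k := by
  rw [← countP_occPos]
  exact sorted_countP_lt_getD (occPos_sorted w b) (by rw [length_occPos]; omega)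

lemma pmch_eq_statN {n : ℕ} {w : List Bool} (hw1 : w.count true = n)
    (hw2 : w.count false = n) : pmch n P1 w = statN w := by
  unfold pmch statN
  have lP : (occPos w true).length = n := by rw [length_occPos, hw1]
  have lQ : (occPos w false).length = n := by rw [length_occPos, hw2]
  apply Finset.card_bij' (i := fun i _ => (occPos w false).getD (i-1) 0)
    (j := fun q _ => (w.take q).count false + 1)
  · -- hi : maps into target
    intro i hi
    simp only [Finset.mem_filter, Finset.mem_Icc] at hi
    obtain ⟨⟨hi1, hi2⟩, hps⟩ := hi
    have hin : i + 1 ≤ n := by omega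
    have hq0m : (occPos w false).getD (i-1) 0 ∈ occPos w false := getD_mem_self (by omega)
    simp only [Finset.mem_filter, Finset.mem_range]
    refine ⟨mem_occPos_lt _ _ hq0m, val_at hq0m, ?_⟩
    have hcf : (w.take ((occPos w false).getD (i-1) 0)).count false = i - 1 :=
      count_take_getD (by omega)
    have hp1 : (occPos w true).getD i 0 < (occPos w false).getD (i-1) 0 :=
      (pairedSubword_eq_P1_iff hw1 hw2 hi1 hin).mp hps
    have hct : i + 1 ≤ (w.take ((occPos w false).getD (i-1) 0)).count true := by
      rw [← countP_occPos]
      exact (sorted_getD_lt_iff (occPos_sorted w true) i _ (by omega)).mp hp1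
    omega
  · -- hj
    intro q hq
    simp only [Finset.mem_filter, Finset.mem_range] at hq
    obtain ⟨hqlen, hval, hcnt⟩ := hq
    have hqm : q ∈ occPos w false := by
      rw [mem_occPos_iff]
      exact ⟨hqlen, by simpa using hval⟩
    have hle : (w.take q).count true ≤ n := hw1 ▸ count_take_le w true q
    simp only [Finset.mem_filter, Finset.mem_Icc]
    constructor
    · omega
    · have hrec : (occPos w false).getD ((w.take q).count false + 1 - 1) 0 = q := by
        simpa using index_recover hqm
      refine (pairedSubword_eq_P1_iff hw1 hw2 (by omega) (by omega)).mpr ?_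
      rw [hrec]
      rw [sorted_getD_lt_iff (occPos_sorted w true) _ q (by omega), countP_occPos]
      omega
  · -- left inverse
    intro i hi
    simp only [Finset.mem_filter, Finset.mem_Icc] at hi
    obtain ⟨⟨hi1, hi2⟩, _⟩ := hi
    rw [count_take_getD (by omega)]
    omega
  · -- right inverse
    intro q hq
    simp only [Finset.mem_filter, Finset.mem_range] at hq
    obtain ⟨hqlen, hval, _⟩ := hq
    have hqm : q ∈ occPos w false := by
      rw [mem_occPos_iff]
      exact ⟨hqlen, by simpa using hval⟩
    simpa using index_recover hqm


def sc (w : List Bool) (x : Bool) (f : ℕ → ℕ → Bool) : ℕ :=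
  ((Finset.range w.length).filter
    (fun j => w.getD j true = x ∧ f ((w.take j).count true) ((w.take j).count false) = true)).card

lemma sc_append (w : List Bool) (y x : Bool) (f : ℕ → ℕ → Bool) :
    sc (w ++ [y]) x f = sc w x f +
      if (y = x ∧ f (w.count true) (w.count false) = true) then 1 else 0 := by
  unfold sc
  rw [Finset.card_filter, Finset.card_filter, List.length_append, List.length_singleton,
    Finset.sum_range_succ]
  congr 1
  · apply Finset.sum_congr rfl
    intro j hj
    rw [Finset.mem_range] at hj
    rw [List.getD_append _ _ _ _ hj, List.take_append_of_le_length hj.le]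
  · rw [List.getD_append_right _ _ _ _ le_rfl, Nat.sub_self,
      List.take_left]
    simp

lemma sc_total (w : List Bool) (x : Bool) : sc w x (fun _ _ => true) = w.count x := by
  induction w using List.reverseRecOn with
  | nil => simp [sc]
  | append_singleton w y ih =>
    rw [sc_append, ih, List.count_append]
    cases y <;> cases x <;> simp

lemma crossingA (w : List Bool) :
    sc w false (fun a b => decide (b + 2 ≤ a)) + (w.count true - (w.count false + 1)) =
      sc w true (fun a b => decide (b + 1 ≤ a)) := by
  induction w using List.reverseRecOn with
  | nil => simp [sc]
  | append_singleton w y ih =>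
    rw [sc_append, sc_append, List.count_append, List.count_append]
    cases y <;> simp only [decide_eq_true_eq] <;> split_ifs <;> simp_all <;> omega

lemma crossingB (w : List Bool) :
    sc w true (fun a b => decide (b ≤ a)) =
      sc w false (fun a b => decide (b + 1 ≤ a)) + (w.count true - w.count false) := by
  induction w using List.reverseRecOn with
  | nil => simp [sc]
  | append_singleton w y ih =>
    rw [sc_append, sc_append, List.count_append, List.count_append]
    cases y <;> simp only [decide_eq_true_eq] <;> split_ifs <;> simp_all <;> omega

lemma split1 (w : List Bool) :
    sc w true (fun a b => decide (b ≤ a)) =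
      sc w true (fun a b => decide (b + 1 ≤ a)) + sc w true (fun a b => decide (a = b)) := by
  induction w using List.reverseRecOn with
  | nil => simp [sc]
  | append_singleton w y ih =>
    rw [sc_append, sc_append, sc_append]
    cases y <;> simp only [decide_eq_true_eq] <;> split_ifs <;> simp_all <;> omega

lemma split3 (w : List Bool) :
    sc w false (fun a b => decide (b + 1 ≤ a)) =
      sc w false (fun a b => decide (b + 2 ≤ a)) + sc w false (fun a b => decide (a = b + 1)) := by
  induction w using List.reverseRecOn with
  | nil => simp [sc]
  | append_singleton w y ih =>
    rw [sc_append, sc_append, sc_append]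
    cases y <;> simp only [decide_eq_true_eq] <;> split_ifs <;> simp_all <;> omega

lemma split2 (w : List Bool) :
    sc w false (fun _ _ => true) =
      sc w false (fun a b => decide (b + 1 ≤ a)) + sc w false (fun a b => decide (a ≤ b)) := by
  induction w using List.reverseRecOn with
  | nil => simp [sc]
  | append_singleton w y ih =>
    rw [sc_append, sc_append, sc_append]
    cases y <;> simp only [decide_eq_true_eq] <;> split_ifs <;> simp_all <;> omega

lemma count_map_not (w : List Bool) (x : Bool) :
    (w.map (fun c => !c)).count x = w.count (!x) := by
  induction w with
  | nil => simp
  | cons y t ih =>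
    simp only [List.map_cons, List.count_cons, ih]
    cases y <;> cases x <;> simp

lemma sc_map_not (w : List Bool) (x : Bool) (f : ℕ → ℕ → Bool) :
    sc (w.map (fun c => !c)) x f = sc w (!x) (fun a b => f b a) := by
  induction w using List.reverseRecOn with
  | nil => simp [sc]
  | append_singleton w y ih =>
    rw [List.map_append, List.map_singleton, sc_append, sc_append, ih,
      count_map_not, count_map_not]
    congr 1
    cases y <;> cases x <;> simp

lemma per_word {n : ℕ} (w : List Bool) (h1 : w.count true = n) (h2 : w.count false = n) :
    n = sc w false (fun a b => decide (b + 2 ≤ a)) + sc w true (fun a b => decide (a = b)) +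
      (sc (w.map (fun c => !c)) false (fun a b => decide (b + 2 ≤ a)) +
       sc (w.map (fun c => !c)) true (fun a b => decide (a = b))) := by
  have h1' : (w.map (fun c => !c)).count true = n := by rw [count_map_not]; simpa using h2
  have h2' : (w.map (fun c => !c)).count false = n := by rw [count_map_not]; simpa using h1
  -- balanced instances
  have cA := crossingA w
  have cB := crossingB w
  have s1 := split1 w
  have s3 := split3 w
  have s2 := split2 w
  have cA' := crossingA (w.map (fun c => !c))
  have s1' := split1 (w.map (fun c => !c))
  have cB' := crossingB (w.map (fun c => !c))
  -- identify nLE0 w with eGE0 of complement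
  have hcmp : sc (w.map (fun c => !c)) true (fun a b => decide (b ≤ a)) =
      sc w false (fun a b => decide (a ≤ b)) := by
    rw [sc_map_not]
    rfl
  have htot : sc w false (fun _ _ => true) = n := by rw [sc_total, h2]
  rw [h1, h2] at cA cB
  rw [h1', h2'] at cA' cB'
  omega


open Finset in
/-- The splitting bijection: words in `Wds n n` with a balanced prefix of length `2k`
followed by a `true`. -/
lemma card_balanced_split {n k : ℕ} (hk : k < n) :
    ((Wds n n).filter (fun w => w.getD (2*k) true = true ∧
        (w.take (2*k)).count true = (w.take (2*k)).count false)).card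
      = (2*k).choose k * (2*(n-k)-1).choose (n-k-1) := by
  have hcard : ((Wds k k) ×ˢ (Wds (n-k-1) (n-k))).card
      = (2*k).choose k * (2*(n-k)-1).choose (n-k-1) := by
    rw [Finset.card_product, card_Wds, card_Wds]
    congr 2 <;> omega
  rw [← hcard]
  apply Finset.card_bij' (i := fun w _ => (w.take (2*k), w.drop (2*k+1)))
    (j := fun p _ => p.1 ++ true :: p.2)
  · -- forward membership
    intro w hw
    simp only [Finset.mem_filter] at hw
    obtain ⟨hwm, hget, hbal⟩ := hw
    rw [mem_Wds] at hwm
    obtain ⟨hct, hcf⟩ := hwm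
    have hlen : w.length = 2*n := by have := count_true_add_count_false w; omega
    have h2k : 2*k < w.length := by omega
    have hdec : w = w.take (2*k) ++ true :: w.drop (2*k+1) := by
      conv_lhs => rw [← List.take_append_drop (2*k) w]
      congr 1
      rw [List.drop_eq_getElem_cons h2k]
      congr 1
      rw [← List.getD_eq_getElem w true h2k]
      exact hget
    have hlt : (w.take (2*k)).length = 2*k := by
      rw [List.length_take]; omega
    have htc : (w.take (2*k)).count true = k := by
      have := count_true_add_count_false (w.take (2*k))
      omega
    have hfc : (w.take (2*k)).count false = k := by omega
    have hvc : (w.drop (2*k+1)).count true = n - k - 1 ∧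
        (w.drop (2*k+1)).count false = n - k := by
      have h1 : w.count true = (w.take (2*k)).count true + 1 + (w.drop (2*k+1)).count true := by
        conv_lhs => rw [hdec]
        simp [List.count_append, List.count_cons]
        omega
      have h2 : w.count false = (w.take (2*k)).count false + (w.drop (2*k+1)).count false := by
        conv_lhs => rw [hdec]
        simp [List.count_append, List.count_cons]
      constructor <;> omega
    simp only [Finset.mem_product]
    exact ⟨(mem_Wds _ _ _).mpr ⟨htc, hfc⟩, (mem_Wds _ _ _).mpr hvc⟩
  · -- backward membership
    intro p hp
    simp only [Finset.mem_product] at hp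
    obtain ⟨hu, hv⟩ := hp
    rw [mem_Wds] at hu hv
    have hul : p.1.length = 2*k := by have := count_true_add_count_false p.1; omega
    have htake : (p.1 ++ true :: p.2).take (2*k) = p.1 := List.take_left' hul
    simp only [Finset.mem_filter]
    refine ⟨?_, ?_, ?_⟩
    · rw [mem_Wds]
      constructor
      · rw [List.count_append, List.count_cons]
        simp only [hu.1, hv.1]
        simp; omega
      · rw [List.count_append, List.count_cons]
        simp only [hu.2, hv.2]
        simp; omega
    · rw [List.getD_append_right _ _ _ _ (by omega), hul, Nat.sub_self]
      rfl
    · rw [htake, hu.1, hu.2]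
  · -- left inverse
    intro w hw
    simp only [Finset.mem_filter] at hw
    obtain ⟨hwm, hget, _⟩ := hw
    rw [mem_Wds] at hwm
    have hlen : w.length = 2*n := by have := count_true_add_count_false w; omega
    have h2k : 2*k < w.length := by omega
    conv_rhs => rw [← List.take_append_drop (2*k) w]
    congr 1
    rw [List.drop_eq_getElem_cons h2k]
    congr 1
    rw [← List.getD_eq_getElem w true h2k]
    exact hget.symm
  · -- right inverse
    intro p hp
    simp only [Finset.mem_product] at hp
    obtain ⟨hu, _⟩ := hp
    rw [mem_Wds] at hu
    have hul : p.1.length = 2*k := by have := count_true_add_count_false p.1; omega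
    have h1 : (p.1 ++ true :: p.2).take (2*k) = p.1 := List.take_left' hul
    have h2 : (p.1 ++ true :: p.2).drop (2*k+1) = p.2 := by
      have : p.1 ++ true :: p.2 = (p.1 ++ [true]) ++ p.2 := by simp
      rw [this, List.drop_left' (by simp [hul])]
    rw [h1, h2]


open Finset Nat

/-- symmetry: `2 Σ k a_k a_{m-k} = m Σ a_k a_{m-k}` -/
lemma conv_sym (m : ℕ) :
    2 * ∑ k ∈ range (m+1), k * (centralBinom k * centralBinom (m-k)) =
      m * ∑ k ∈ range (m+1), centralBinom k * centralBinom (m-k) := by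
  have h := Finset.sum_range_reflect (fun k => k * (centralBinom k * centralBinom (m-k))) (m+1)
  -- h : ∑ j in range (m+1), f (m+1-1-j) = ∑ j in range (m+1), f j
  have h2 : ∑ j ∈ range (m+1), (m-j) * (centralBinom (m-j) * centralBinom j) =
      ∑ k ∈ range (m+1), k * (centralBinom k * centralBinom (m-k)) := by
    rw [← h]
    apply Finset.sum_congr rfl
    intro j hj
    rw [Finset.mem_range] at hj
    have : m + 1 - 1 - j = m - j := by omega
    rw [this]
    have : m - (m - j) = j := by omega
    rw [this]
  have expand : ∀ k ∈ range (m+1),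
      m * (centralBinom k * centralBinom (m-k)) =
        k * (centralBinom k * centralBinom (m-k)) +
          (m-k) * (centralBinom (m-k) * centralBinom k) := by
    intro k hk
    rw [Finset.mem_range] at hk
    have : centralBinom (m-k) * centralBinom k = centralBinom k * centralBinom (m-k) :=
      mul_comm _ _
    rw [this, ← Nat.add_mul]
    congr 1
    omega
  conv_rhs => rw [Finset.mul_sum]
  rw [Finset.sum_congr rfl expand, Finset.sum_add_distrib, h2]
  omega

lemma conv_step (m : ℕ) :
    ∑ k ∈ range (m+1+1), k * (centralBinom k * centralBinom (m+1-k)) =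
      2 * (m+1) * ∑ k ∈ range (m+1), centralBinom k * centralBinom (m-k) := by
  rw [Finset.sum_range_succ' (fun k => k * (centralBinom k * centralBinom (m+1-k))) (m+1)]
  simp only [Nat.zero_mul, Nat.add_zero]
  have term : ∀ k ∈ range (m+1),
      (k+1) * (centralBinom (k+1) * centralBinom (m+1-(k+1))) =
        2 * ((2*k+1) * (centralBinom k * centralBinom (m-k))) := by
    intro k hk
    have hrec := Nat.succ_mul_centralBinom_succ k
    have : m + 1 - (k+1) = m - k := by omega
    rw [this, ← Nat.mul_assoc, hrec]
    ring
  rw [Finset.sum_congr rfl term, ← Finset.mul_sum]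
  have expand : ∀ k ∈ range (m+1),
      (2*k+1) * (centralBinom k * centralBinom (m-k)) =
        2 * (k * (centralBinom k * centralBinom (m-k))) +
          centralBinom k * centralBinom (m-k) := by
    intro k _; ring
  rw [Finset.sum_congr rfl expand, Finset.sum_add_distrib, ← Finset.mul_sum, conv_sym m]
  ring

lemma centralBinom_conv (n : ℕ) :
    ∑ k ∈ range (n+1), centralBinom k * centralBinom (n-k) = 4^n := by
  induction n with
  | zero => simp [centralBinom]
  | succ m ih =>
    have h1 := conv_sym (m+1)
    have h2 := conv_step m
    rw [ih] at h2
    -- (m+1) * s_{m+1} = 2 * (2*(m+1)*4^m) = (m+1) * 4^(m+1)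
    have h3 : (m+1) * (∑ k ∈ range (m+1+1), centralBinom k * centralBinom (m+1-k)) =
        (m+1) * 4^(m+1) := by
      rw [← h1, h2]
      ring
    exact Nat.eq_of_mul_eq_mul_left (by omega) h3

lemma sc_def (w : List Bool) (x : Bool) (f : ℕ → ℕ → Bool) : sc w x f =
  ((Finset.range w.length).filter
    (fun j => w.getD j true = x ∧ f ((w.take j).count true) ((w.take j).count false) = true)).card := rfl


open Finset Nat

lemma statN_eq_sc (w : List Bool) : statN w = sc w false (fun a b => decide (b + 2 ≤ a)) := by
  rw [sc_def, statN]
  congr 1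
  apply Finset.filter_congr
  intro j _
  simp only [decide_eq_true_eq]

lemma sum_range_even_odd (g : ℕ → ℕ) (n : ℕ) :
    ∑ j ∈ range (2*n), g j = ∑ k ∈ range n, (g (2*k) + g (2*k+1)) := by
  induction n with
  | zero => simp
  | succ m ih =>
    have h : 2*(m+1) = (2*m + 1) + 1 := by ring
    rw [h, Finset.sum_range_succ, Finset.sum_range_succ, Finset.sum_range_succ, ih]
    omega

lemma halving {m : ℕ} (hm : 1 ≤ m) : 2 * ((2*m-1).choose (m-1)) = centralBinom m := by
  obtain ⟨t, rfl⟩ : ∃ t, m = t + 1 := ⟨m - 1, by omega⟩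
  have h3 : 2*(t+1)-1 = 2*t+1 := by omega
  have h4 : t+1-1 = t := by omega
  rw [h3, h4, centralBinom]
  have h1 : 2*(t+1) = (2*t+1)+1 := by ring
  rw [h1, Nat.choose_succ_succ]
  have h2 : (2*t+1).choose (t+1) = (2*t+1).choose t := by
    have hs := Nat.choose_symm (show t+1 ≤ 2*t+1 by omega)
    have heq : 2*t+1 - (t+1) = t := by omega
    rw [heq] at hs
    exact hs.symm
  rw [h2]
  omega

lemma e0_as_sum {n : ℕ} (w : List Bool) (hw : w ∈ Wds n n) :
    sc w true (fun a b => decide (a = b)) =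
      ∑ j ∈ range (2*n),
        (if (w.getD j true = true ∧ (w.take j).count true = (w.take j).count false)
          then 1 else 0) := by
  rw [sc_def, Finset.card_filter]
  rw [mem_Wds] at hw
  have hlen : w.length = 2*n := by have := count_true_add_count_false w; omega
  rw [hlen]
  apply Finset.sum_congr rfl
  intro j _
  simp only [decide_eq_true_eq]

lemma sum_e0 {n : ℕ} (hn : 1 ≤ n) :
    2 * (∑ w ∈ Wds n n, sc w true (fun a b => decide (a = b))) + centralBinom n = 4^n := by
  have hswap : ∑ w ∈ Wds n n, sc w true (fun a b => decide (a = b)) =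
      ∑ j ∈ range (2*n), ∑ w ∈ Wds n n,
        (if (w.getD j true = true ∧ (w.take j).count true = (w.take j).count false)
          then 1 else 0) := by
    rw [Finset.sum_congr rfl (fun w hw => e0_as_sum w hw), Finset.sum_comm]
  have hodd : ∀ k, k < n → ∑ w ∈ Wds n n,
      (if (w.getD (2*k+1) true = true ∧
        (w.take (2*k+1)).count true = (w.take (2*k+1)).count false) then 1 else 0) = 0 := by
    intro k hkn
    apply Finset.sum_eq_zero
    intro w hw
    rw [if_neg]
    rintro ⟨-, hbal⟩
    rw [mem_Wds] at hw
    have hlen : w.length = 2*n := by have := count_true_add_count_false w; omega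
    have hcc := count_true_add_count_false (w.take (2*k+1))
    rw [List.length_take, hlen] at hcc
    omega
  have heven : ∀ k, k < n → ∑ w ∈ Wds n n,
      (if (w.getD (2*k) true = true ∧
        (w.take (2*k)).count true = (w.take (2*k)).count false) then 1 else 0) =
      (2*k).choose k * (2*(n-k)-1).choose (n-k-1) := by
    intro k hk
    rw [← card_balanced_split hk, Finset.card_filter]
  rw [hswap, sum_range_even_odd]
  have hterm : ∀ k ∈ range n, (∑ w ∈ Wds n n,
      (if (w.getD (2*k) true = true ∧
        (w.take (2*k)).count true = (w.take (2*k)).count false) then 1 else 0)) +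
      (∑ w ∈ Wds n n,
      (if (w.getD (2*k+1) true = true ∧
        (w.take (2*k+1)).count true = (w.take (2*k+1)).count false) then 1 else 0)) =
      (2*k).choose k * (2*(n-k)-1).choose (n-k-1) := by
    intro k hk
    rw [Finset.mem_range] at hk
    rw [heven k hk, hodd k hk]
    omega
  rw [Finset.sum_congr rfl hterm]
  -- now: 2 * Σ_{k<n} a_k * half_k + a_n = 4^n
  have hdouble : ∀ k ∈ range n,
      2 * ((2*k).choose k * (2*(n-k)-1).choose (n-k-1)) =
        centralBinom k * centralBinom (n-k) := by
    intro k hk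
    rw [Finset.mem_range] at hk
    rw [← halving (m := n - k) (by omega)]
    rw [centralBinom]
    ring
  rw [Finset.mul_sum, Finset.sum_congr rfl hdouble]
  have := centralBinom_conv n
  rw [Finset.sum_range_succ] at this
  simp only [Nat.sub_self, centralBinom_zero, Nat.mul_one] at this
  omega

lemma sum_comp (n : ℕ) (F : List Bool → ℕ) :
    ∑ w ∈ Wds n n, F (w.map (fun c => !c)) = ∑ w ∈ Wds n n, F w := by
  refine Finset.sum_bij' (i := fun w _ => w.map (fun c => !c))
    (j := fun w _ => w.map (fun c => !c)) ?_ ?_ ?_ ?_ ?_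
  · intro a ha
    rw [mem_Wds] at ha ⊢
    rw [count_map_not, count_map_not]
    simpa using ⟨ha.2, ha.1⟩
  · intro a ha
    rw [mem_Wds] at ha ⊢
    rw [count_map_not, count_map_not]
    simpa using ⟨ha.2, ha.1⟩
  · intro a _
    simp [List.map_map, Function.comp_def, Bool.not_not]
  · intro a _
    simp [List.map_map, Function.comp_def, Bool.not_not]
  · intro a _
    rfl

lemma grand {n : ℕ} (hn : 1 ≤ n) :
    (n+1) * centralBinom n = 2 * (∑ w ∈ Wds n n, statN w) + 4^n := by
  have hsum : ∑ w ∈ Wds n n, (n : ℕ) = n * centralBinom n := by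
    rw [Finset.sum_const, card_Wds, smul_eq_mul, centralBinom]
    ring_nf
  have hper : ∑ w ∈ Wds n n, (n:ℕ) = ∑ w ∈ Wds n n,
      (sc w false (fun a b => decide (b + 2 ≤ a)) + sc w true (fun a b => decide (a = b)) +
      (sc (w.map (fun c => !c)) false (fun a b => decide (b + 2 ≤ a)) +
       sc (w.map (fun c => !c)) true (fun a b => decide (a = b)))) := by
    apply Finset.sum_congr rfl
    intro w hw
    rw [mem_Wds] at hw
    exact per_word w hw.1 hw.2
  rw [hper] at hsum
  rw [Finset.sum_add_distrib, Finset.sum_add_distrib, Finset.sum_add_distrib] at hsum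
  rw [sum_comp n (fun w => sc w false (fun a b => decide (b + 2 ≤ a))),
      sum_comp n (fun w => sc w true (fun a b => decide (a = b)))] at hsum
  have he0 := sum_e0 hn
  have hstat : ∑ w ∈ Wds n n, statN w =
      ∑ w ∈ Wds n n, sc w false (fun a b => decide (b + 2 ≤ a)) :=
    Finset.sum_congr rfl (fun w _ => statN_eq_sc w)
  rw [hstat]
  calc (n+1) * centralBinom n = n * centralBinom n + centralBinom n := by ring
    _ = (∑ w ∈ Wds n n, sc w false (fun a b => decide (b + 2 ≤ a))) +
          (∑ w ∈ Wds n n, sc w true (fun a b => decide (a = b))) +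
          ((∑ w ∈ Wds n n, sc w false (fun a b => decide (b + 2 ≤ a))) +
           (∑ w ∈ Wds n n, sc w true (fun a b => decide (a = b)))) + centralBinom n := by
        rw [hsum]
    _ = 2 * (∑ w ∈ Wds n n, sc w false (fun a b => decide (b + 2 ≤ a))) +
          (2 * (∑ w ∈ Wds n n, sc w true (fun a b => decide (a = b))) + centralBinom n) := by
        ring
    _ = 2 * (∑ w ∈ Wds n n, sc w false (fun a b => decide (b + 2 ≤ a))) + 4^n := by
        rw [he0]

theorem total_P1_matches (n : ℕ) (hn : 1 ≤ n) :
    ∑ᶠ w ∈ {w : List Bool | memL n w}, pmch n P1 w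
      = ((n+1) * (2*n).choose n - 4^n) / 2 := by
  have hset : {w : List Bool | memL n w} = ↑(Wds n n) := by
    ext w
    constructor
    · intro h
      exact Finset.mem_coe.mpr ((mem_Wds n n w).mpr ⟨h.1, h.2⟩)
    · intro h
      have := (mem_Wds n n w).mp (Finset.mem_coe.mp h)
      exact ⟨this.1, this.2⟩
  rw [hset, finsum_mem_coe_finset]
  have hT : ∑ w ∈ Wds n n, pmch n P1 w = ∑ w ∈ Wds n n, statN w := by
    apply Finset.sum_congr rfl
    intro w hw
    rw [mem_Wds] at hw
    exact pmch_eq_statN hw.1 hw.2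
  rw [hT]
  have hg := grand hn
  have hcb : Nat.centralBinom n = (2*n).choose n := Nat.centralBinom_eq_two_mul_choose n
  rw [← hcb, hg]
  omega
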